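/- Harmonic-type sum bound (inequality (30) of the paper): For every positive integer ℓ and every a ∈ (0,1): ∑_{j=0}^{ℓ−1} 1/(ℓ − a·j) ≤ 1/(ℓ(1−a) + a) + (1/a)·ln( ℓ/(ℓ(1−a) + a) ). -/

import Mathlib

lemma harmonic_key_ineq (a x : ℝ) (ha : 0 < a) (hx : 0 < x - a) :
    1 / x ≤ (1 / a) * (Real.log x - Real.log (x - a)) := by
  have hx0 : 0 < x := by linarith
  have h1 : Real.log ((x - a) / x) ≤ (x - a) / x - 1 :=
    Real.log_le_sub_one_of_pos (by positivity)
  rw [Real.log_div (by linarith) (by linarith)] at h1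
  have h2 : (x - a) / x - 1 = -(a / x) := by field_simp; ring
  rw [h2] at h1
  have h3 : a / x ≤ Real.log x - Real.log (x - a) := by linarith
  have h4 : (1 / a) * (a / x) ≤ (1 / a) * (Real.log x - Real.log (x - a)) :=
    mul_le_mul_of_nonneg_left h3 (by positivity)
  calc 1 / x = (1 / a) * (a / x) := by field_simp
    _ ≤ _ := h4

/-- **Harmonic-type sum bound (inequality (30) of the paper).** For every positive
integer `ℓ` and every `a ∈ (0,1)`:
`∑_{j=0}^{ℓ−1} 1/(ℓ − a·j) ≤ 1/(ℓ(1−a) + a) + (1/a)·ln(ℓ/(ℓ(1−a) + a))`. -/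
theorem harmonic_type_sum_bound (ℓ : ℕ) (hℓ : 0 < ℓ) (a : ℝ) (ha : a ∈ Set.Ioo (0 : ℝ) 1) :
    ∑ j ∈ Finset.range ℓ, 1 / ((ℓ : ℝ) - a * (j : ℝ)) ≤
      1 / ((ℓ : ℝ) * (1 - a) + a)
        + (1 / a) * Real.log ((ℓ : ℝ) / ((ℓ : ℝ) * (1 - a) + a)) := by
  obtain ⟨ha0, ha1⟩ := ha
  obtain ⟨n, rfl⟩ : ∃ n, ℓ = n + 1 := ⟨ℓ - 1, (Nat.succ_pred_eq_of_pos hℓ).symm⟩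
  rw [Finset.sum_range_succ]
  have hlast : 1 / ((↑(n+1) : ℝ) - a * (n : ℝ)) = 1 / ((↑(n+1) : ℝ) * (1 - a) + a) := by
    push_cast; ring_nf
  rw [hlast]
  have hmain : ∑ j ∈ Finset.range n, 1 / ((↑(n+1) : ℝ) - a * (j : ℝ)) ≤
      (1 / a) * Real.log ((↑(n+1) : ℝ) / ((↑(n+1) : ℝ) * (1 - a) + a)) := by
    have hpos : ∀ j : ℕ, (j : ℝ) ≤ (n : ℝ) + 1 → 0 < ((↑(n+1) : ℝ) - a * (j : ℝ)) := by
      intro j hj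
      have hj0 : (0:ℝ) ≤ (j:ℝ) := Nat.cast_nonneg j
      push_cast
      nlinarith
    have hstep : ∑ j ∈ Finset.range n, 1 / ((↑(n+1) : ℝ) - a * (j : ℝ)) ≤
        ∑ j ∈ Finset.range n, ((1 / a) * Real.log ((↑(n+1) : ℝ) - a * (j : ℝ))
          - (1 / a) * Real.log ((↑(n+1) : ℝ) - a * ((j+1 : ℕ) : ℝ))) := by
      apply Finset.sum_le_sum
      intro j hj
      have hjn : j < n := Finset.mem_range.mp hj
      have hx : 0 < ((↑(n+1) : ℝ) - a * (j : ℝ)) - a := by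
        have hjr : (j:ℝ) ≤ (n:ℝ) := by exact_mod_cast hjn.le
        have := hpos (j+1) (by push_cast; linarith)
        push_cast at this ⊢
        linarith
      have := harmonic_key_ineq a ((↑(n+1) : ℝ) - a * (j : ℝ)) ha0 hx
      rw [← mul_sub]
      convert this using 3
      · rfl
      push_cast; ring
    refine hstep.trans ?_
    rw [Finset.sum_range_sub' (fun i => (1 / a) * Real.log ((↑(n+1) : ℝ) - a * (i : ℝ)))]
    have h1 : ((↑(n+1) : ℝ) - a * ((0:ℕ) : ℝ)) = (↑(n+1) : ℝ) := by push_cast; ring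
    have h2 : ((↑(n+1) : ℝ) - a * (n : ℝ)) = (↑(n+1) : ℝ) * (1 - a) + a := by push_cast; ring
    rw [h1, h2, ← mul_sub, ← Real.log_div]
    · push_cast; positivity
    · have := hpos n (by linarith)
      push_cast at this ⊢
      nlinarith
  linarith
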